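/- Under the grounded Laplacian setup, for any two followers i, j ∈ F: 𝟏ᵀ(L_F + E_ii + E_jj)^{-1}(b + e_i + e_j) − 𝟏ᵀ(L_F + E_ii)^{-1}(b + e_i) ≤ 𝟏ᵀ(L_F + E_jj)^{-1}(b + e_j) − 𝟏ᵀL_F^{-1}b. (That is, for two added edges e₁ incident to follower i and e₂ incident to follower j, H({e₁,e₂}) − H({e₁}) ≤ H({e₂}) − H(∅).) -/

import Mathlib

open Matrix Finset

/-- A positive definite Z-matrix (nonpositive off-diagonal) maps nonnegative
solutions: if `M *ᵥ x` is entrywise nonnegative, so is `x`. -/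
lemma zsolve_nonneg {n : Type} [Fintype n] [DecidableEq n] (M : Matrix n n ℝ)
    (hPD : M.PosDef) (hZ : ∀ k l, k ≠ l → M k l ≤ 0)
    (x : n → ℝ) (hy : ∀ k, 0 ≤ (M *ᵥ x) k) : ∀ k, 0 ≤ x k := by
  set z : n → ℝ := fun k => max (-x k) 0 with hzdef
  have hz0 : ∀ k, 0 ≤ z k := fun k => le_max_right _ _
  set p : n → ℝ := fun k => max (x k) 0 with hpdef
  have hp0 : ∀ k, 0 ≤ p k := fun k => le_max_right _ _
  have hxz : ∀ k, p k = x k + z k := by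
    intro k
    rcases le_total (x k) 0 with h | h
    · simp [hpdef, hzdef, max_eq_right h, max_eq_left (neg_nonneg.mpr h)]
    · simp [hpdef, hzdef, max_eq_left h, max_eq_right (neg_nonpos.mpr h)]
  have hzp : ∀ k, z k * p k = 0 := by
    intro k
    rcases le_total (x k) 0 with h | h
    · simp [hpdef, max_eq_right h]
    · simp [hzdef, max_eq_right (neg_nonpos.mpr h)]
  have h1 : 0 ≤ z ⬝ᵥ (M *ᵥ x) := by
    apply Finset.sum_nonneg
    intro k _
    exact mul_nonneg (hz0 k) (hy k)
  have h2 : z ⬝ᵥ (M *ᵥ p) ≤ 0 := by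
    simp only [dotProduct, mulVec, dotProduct, Finset.mul_sum]
    apply Finset.sum_nonpos
    intro k _
    apply Finset.sum_nonpos
    intro l _
    rcases eq_or_ne k l with h | h
    · subst h
      rw [show z k * (M k k * p k) = M k k * (z k * p k) by ring, hzp k, mul_zero]
    · have := hZ k l h
      have := mul_nonneg (hz0 k) (hp0 l)
      nlinarith
  have hzero : z = 0 := by
    by_contra hz
    have hpos := hPD.dotProduct_mulVec_pos hz
    rw [star_trivial] at hpos
    have : z ⬝ᵥ (M *ᵥ z) ≤ 0 := by
      have hpxz : p = x + z := funext fun k => (hxz k).trans (Pi.add_apply x z k).symm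
      have hMp : M *ᵥ p = M *ᵥ x + M *ᵥ z := by rw [hpxz, mulVec_add]
      have : z ⬝ᵥ (M *ᵥ p) = z ⬝ᵥ (M *ᵥ x) + z ⬝ᵥ (M *ᵥ z) := by
        rw [hMp, dotProduct_add]
      linarith
    linarith
  intro k
  have hzk : z k = 0 := by rw [hzero]; rfl
  have hle : -x k ≤ z k := le_max_left _ _
  rw [hzk] at hle
  linarith

lemma vecMulVec_mulVec' {n : Type} [Fintype n] (w v y : n → ℝ) :
    vecMulVec w v *ᵥ y = (v ⬝ᵥ y) • w := by
  funext k
  simp only [mulVec, dotProduct, vecMulVec_apply, Pi.smul_apply, smul_eq_mul,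
    Finset.mul_sum]
  rw [Finset.sum_mul]
  apply Finset.sum_congr rfl
  intro l _
  ring

lemma psd_vecMulVec {n : Type} [Fintype n] (s : n → ℝ) :
    (vecMulVec s s).PosSemidef := by
  rw [posSemidef_iff_dotProduct_mulVec]
  constructor
  · ext k l
    simp [vecMulVec_apply, conjTranspose_apply, mul_comm]
  · intro y
    rw [star_trivial, vecMulVec_mulVec', dotProduct_smul, smul_eq_mul, dotProduct_comm]
    exact mul_self_nonneg _

lemma inv_mulVec_of {n : Type} [Fintype n] [DecidableEq n] {M : Matrix n n ℝ}
    (h : IsUnit M.det) {y c : n → ℝ} (hc : M *ᵥ y = c) : M⁻¹ *ᵥ c = y := by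
  rw [← hc, mulVec_mulVec, nonsing_inv_mul _ h, one_mulVec]

lemma single_nonneg' {n : Type} [DecidableEq n] (m k : n) : 0 ≤ (Pi.single m 1 : n → ℝ) k := by
  rcases eq_or_ne k m with rfl | h
  · simp
  · simp [Pi.single_apply, h]

lemma one_dot {n : Type} [Fintype n] (y : n → ℝ) : (1 : n → ℝ) ⬝ᵥ y = ∑ k, y k := by
  simp [dotProduct]

lemma one_dot_nonneg {n : Type} [Fintype n] {y : n → ℝ} (h : ∀ k, 0 ≤ y k) :
    0 ≤ (1 : n → ℝ) ⬝ᵥ y := by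
  rw [one_dot]; exact Finset.sum_nonneg fun k _ => h k

set_option maxHeartbeats 2000000 in
theorem stmt5 {V : Type} [Fintype V] [DecidableEq V]
    (G : SimpleGraph V) [DecidableRel G.Adj] (hconn : G.Connected)
    (F S0 S1 : Finset V)
    (hFne : F.Nonempty) (hS1ne : S1.Nonempty)
    (hFS0 : Disjoint F S0) (hFS1 : Disjoint F S1) (hS0S1 : Disjoint S0 S1)
    (hcover : F ∪ S0 ∪ S1 = Finset.univ)
    (LF : Matrix F F ℝ)
    (hLF : LF = (G.lapMatrix ℝ).submatrix (fun i : F => (i : V)) (fun i : F => (i : V)))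
    (hPD : LF.PosDef) (hnn : ∀ i j : F, 0 ≤ LF⁻¹ i j)
    (b : F → ℝ)
    (hb : ∀ i : F, b i = ((S1.filter fun a => G.Adj a (i : V)).card : ℝ))
    (i j : F) :
    (1 : F → ℝ) ⬝ᵥ ((LF + vecMulVec (Pi.single i 1) (Pi.single i 1)
          + vecMulVec (Pi.single j 1) (Pi.single j 1))⁻¹
        *ᵥ (b + Pi.single i 1 + Pi.single j 1))
      - (1 : F → ℝ) ⬝ᵥ ((LF + vecMulVec (Pi.single i 1) (Pi.single i 1))⁻¹
        *ᵥ (b + Pi.single i 1))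
    ≤ (1 : F → ℝ) ⬝ᵥ ((LF + vecMulVec (Pi.single j 1) (Pi.single j 1))⁻¹
        *ᵥ (b + Pi.single j 1))
      - (1 : F → ℝ) ⬝ᵥ (LF⁻¹ *ᵥ b) := by
  set si : F → ℝ := Pi.single i 1 with hsidef
  set sj : F → ℝ := Pi.single j 1 with hsjdef
  set Ei : Matrix F F ℝ := vecMulVec si si with hEidef
  set Ej : Matrix F F ℝ := vecMulVec sj sj with hEjdef
  -- Z-matrix property of LF
  have hZ : ∀ k l : F, k ≠ l → LF k l ≤ 0 := by
    intro k l hkl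
    have hne : (k : V) ≠ (l : V) := Subtype.coe_injective.ne hkl
    rw [hLF]
    simp only [submatrix_apply, SimpleGraph.lapMatrix, Matrix.sub_apply,
      SimpleGraph.degMatrix, Matrix.diagonal_apply_ne _ hne, SimpleGraph.adjMatrix_apply]
    split <;> norm_num
  -- off-diagonal entries of the rank-one bumps vanish
  have hEoff : ∀ (m : F) (k l : F), k ≠ l →
      vecMulVec (Pi.single m (1:ℝ)) (Pi.single m 1) k l = 0 := by
    intro m k l hkl
    by_cases hk : k = m
    · by_cases hl : l = m
      · exact absurd (hk.trans hl.symm) hkl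
      · simp [vecMulVec_apply, Pi.single_apply, hl]
    · simp [vecMulVec_apply, Pi.single_apply, hk]
  have hZi : ∀ k l : F, k ≠ l → (LF + Ei) k l ≤ 0 := by
    intro k l hkl
    have := hZ k l hkl
    have h2 := hEoff i k l hkl
    simp only [Matrix.add_apply, hEidef, hsidef] at *
    rw [h2]; linarith
  have hZj : ∀ k l : F, k ≠ l → (LF + Ej) k l ≤ 0 := by
    intro k l hkl
    have := hZ k l hkl
    have h2 := hEoff j k l hkl
    simp only [Matrix.add_apply, hEjdef, hsjdef] at *
    rw [h2]; linarith
  have hZij : ∀ k l : F, k ≠ l → (LF + Ei + Ej) k l ≤ 0 := by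
    intro k l hkl
    have := hZi k l hkl
    have h2 := hEoff j k l hkl
    simp only [Matrix.add_apply, hEjdef, hsjdef] at *
    rw [h2]; linarith
  -- positive definiteness and invertibility
  have hPDi : (LF + Ei).PosDef := hPD.add_posSemidef (psd_vecMulVec si)
  have hPDj : (LF + Ej).PosDef := hPD.add_posSemidef (psd_vecMulVec sj)
  have hPDij : (LF + Ei + Ej).PosDef := hPDi.add_posSemidef (psd_vecMulVec sj)
  have hdet : IsUnit LF.det := (Matrix.isUnit_iff_isUnit_det _).1 hPD.isUnit
  have hdeti : IsUnit (LF + Ei).det := (Matrix.isUnit_iff_isUnit_det _).1 hPDi.isUnit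
  have hdetj : IsUnit (LF + Ej).det := (Matrix.isUnit_iff_isUnit_det _).1 hPDj.isUnit
  have hdetij : IsUnit (LF + Ei + Ej).det := (Matrix.isUnit_iff_isUnit_det _).1 hPDij.isUnit
  -- mulVec by the bump matrices
  have hEimul : ∀ y : F → ℝ, Ei *ᵥ y = y i • si := by
    intro y
    rw [hEidef, vecMulVec_mulVec', hsidef, single_dotProduct, one_mul]
  have hEjmul : ∀ y : F → ℝ, Ej *ᵥ y = y j • sj := by
    intro y
    rw [hEjdef, vecMulVec_mulVec', hsjdef, single_dotProduct, one_mul]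
  -- the slack vector fact: row sums of LF dominate b
  have hr : ∀ k : F, 0 ≤ (LF *ᵥ (1 : F → ℝ)) k - b k := by
    intro k
    have hlhs : (LF *ᵥ (1 : F → ℝ)) k = ∑ w ∈ F, (G.lapMatrix ℝ) (k:V) w := by
      rw [hLF]
      simp only [mulVec, dotProduct, Pi.one_apply, mul_one, submatrix_apply]
      exact Finset.sum_coe_sort F (fun w => (G.lapMatrix ℝ) (k:V) w)
    have htot : ∑ w : V, (G.lapMatrix ℝ) (k:V) w = 0 := by
      have h := congrFun (G.lapMatrix_mulVec_const_eq_zero (R := ℝ)) (k:V)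
      simpa [mulVec, dotProduct] using h
    have hdisj1 : Disjoint (F ∪ S0) S1 := Finset.disjoint_union_left.mpr ⟨hFS1, hS0S1⟩
    have hsplit : ∑ w ∈ F, (G.lapMatrix ℝ) (k:V) w + ∑ w ∈ S0, (G.lapMatrix ℝ) (k:V) w
        + ∑ w ∈ S1, (G.lapMatrix ℝ) (k:V) w = 0 := by
      rw [← Finset.sum_union hFS0, ← Finset.sum_union hdisj1, hcover]
      exact htot
    have hlapS : ∀ w : V, (k:V) ≠ w →
        (G.lapMatrix ℝ) (k:V) w = -(if G.Adj (k:V) w then (1:ℝ) else 0) := by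
      intro w hne
      simp only [SimpleGraph.lapMatrix, Matrix.sub_apply, SimpleGraph.degMatrix,
        Matrix.diagonal_apply_ne _ hne, SimpleGraph.adjMatrix_apply]
      rw [zero_sub]
    have hS0sum : ∑ w ∈ S0, (G.lapMatrix ℝ) (k:V) w
        = -∑ w ∈ S0, (if G.Adj (k:V) w then (1:ℝ) else 0) := by
      rw [← Finset.sum_neg_distrib]
      apply Finset.sum_congr rfl
      intro w hw
      exact hlapS w fun h => (Finset.disjoint_left.mp hFS0 k.2 (h ▸ hw))
    have hS1sum : ∑ w ∈ S1, (G.lapMatrix ℝ) (k:V) w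
        = -∑ w ∈ S1, (if G.Adj (k:V) w then (1:ℝ) else 0) := by
      rw [← Finset.sum_neg_distrib]
      apply Finset.sum_congr rfl
      intro w hw
      exact hlapS w fun h => (Finset.disjoint_left.mp hFS1 k.2 (h ▸ hw))
    have hbk : b k = ∑ w ∈ S1, (if G.Adj (k:V) w then (1:ℝ) else 0) := by
      rw [hb]
      rw [Finset.sum_boole]
      congr 2
      apply Finset.filter_congr
      intro w _
      exact G.adj_comm _ _
    have hS0nn : 0 ≤ ∑ w ∈ S0, (if G.Adj (k:V) w then (1:ℝ) else 0) := by
      apply Finset.sum_nonneg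
      intro w _
      split <;> norm_num
    rw [hlhs, hbk]
    linarith [hsplit, hS0sum, hS1sum, hS0nn]
  -- basic solution vectors
  set x : F → ℝ := LF⁻¹ *ᵥ b with hxdef
  set u : F → ℝ := LF⁻¹ *ᵥ sj with hudef
  set v : F → ℝ := LF⁻¹ *ᵥ si with hvdef
  have hx : LF *ᵥ x = b := by
    rw [hxdef, mulVec_mulVec, mul_nonsing_inv _ hdet, one_mulVec]
  have hu : LF *ᵥ u = sj := by
    rw [hudef, mulVec_mulVec, mul_nonsing_inv _ hdet, one_mulVec]
  have hv : LF *ᵥ v = si := by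
    rw [hvdef, mulVec_mulVec, mul_nonsing_inv _ hdet, one_mulVec]
  have hu0 : ∀ k, 0 ≤ u k :=
    zsolve_nonneg LF hPD hZ u (by rw [hu, hsjdef]; exact single_nonneg' j)
  have hv0 : ∀ k, 0 ≤ v k :=
    zsolve_nonneg LF hPD hZ v (by rw [hv, hsidef]; exact single_nonneg' i)
  have hb0 : ∀ k, 0 ≤ b k := by intro k; rw [hb k]; positivity
  have hx0 : ∀ k, 0 ≤ x k := zsolve_nonneg LF hPD hZ x (by rw [hx]; exact hb0)
  have hx1 : ∀ k, 0 ≤ 1 - x k := by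
    have h := zsolve_nonneg LF hPD hZ ((1 : F → ℝ) - x) ?_
    · intro k; simpa using h k
    · intro k
      rw [mulVec_sub, hx]
      exact hr k
  -- scalar abbreviations
  set a : ℝ := v i with hadef
  set D : ℝ := u j with hDdef
  set c : ℝ := v j with hcdef
  have ha0 : 0 ≤ a := hv0 i
  have hD0 : 0 ≤ D := hu0 j
  have hc0 : 0 ≤ c := hv0 j
  have ha1 : (0:ℝ) < 1 + a := by linarith
  have hD1 : (0:ℝ) < 1 + D := by linarith
  set lam : ℝ := c / (1 + a) with hlamdef
  set mu : ℝ := c / (1 + D) with hmudef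
  have hlam0 : 0 ≤ lam := div_nonneg hc0 ha1.le
  have hlama : lam * (1 + a) = c := div_mul_cancel₀ _ ha1.ne'
  have hmuD : mu * (1 + D) = c := div_mul_cancel₀ _ hD1.ne'
  set A : ℝ := (1 : F → ℝ) ⬝ᵥ u with hAdef
  set q : ℝ := (1 : F → ℝ) ⬝ᵥ v with hqdef
  set T : ℝ := 1 - x j with hTdef
  set g : ℝ := 1 - x i with hgdef
  have hT0 : 0 ≤ T := hx1 j
  have hg0 : 0 ≤ g := hx1 i
  -- symmetry: u i = v j
  have huic : u i = c := by
    have hsymm : LF⁻¹ᵀ = LF⁻¹ := by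
      rw [Matrix.transpose_nonsing_inv]
      congr 1
      exact hPD.isHermitian.eq
    have h1 : u i = LF⁻¹ i j := by simp [hudef, hsjdef, mulVec_single]
    have h2 : c = LF⁻¹ j i := by simp [hcdef, hvdef, hsidef, mulVec_single]
    have h3 : LF⁻¹ i j = LF⁻¹ᵀ j i := rfl
    rw [h1, h2, h3, hsymm]
  -- the auxiliary solution vectors
  set theta : ℝ := g / (1 + a) with hthetadef
  have htheta : theta * (1 + a) = g := div_mul_cancel₀ _ ha1.ne'
  set yi : F → ℝ := x + theta • v with hyidef
  have hyi : (LF + Ei) *ᵥ yi = b + si := by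
    have h1 : LF *ᵥ yi = b + theta • si := by
      rw [hyidef, mulVec_add, mulVec_smul, hx, hv]
    rw [add_mulVec, hEimul, h1]
    have hcoef : theta + yi i = 1 := by
      have hyii : yi i = x i + theta * a := by
        rw [hyidef]; simp [hadef]
      have h3 : theta * (1 + a) = 1 - x i := htheta.trans hgdef
      rw [hyii]
      linear_combination h3
    funext k
    simp only [Pi.add_apply, Pi.smul_apply, smul_eq_mul]
    linear_combination (si k) * hcoef
  set Tj : ℝ := T / (1 + D) with hTjdef
  have hTj : Tj * (1 + D) = T := div_mul_cancel₀ _ hD1.ne'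
  set yj : F → ℝ := x + Tj • u with hyjdef
  have hyj : (LF + Ej) *ᵥ yj = b + sj := by
    have h1 : LF *ᵥ yj = b + Tj • sj := by
      rw [hyjdef, mulVec_add, mulVec_smul, hx, hu]
    rw [add_mulVec, hEjmul, h1]
    have hcoef : Tj + yj j = 1 := by
      have hyjj : yj j = x j + Tj * D := by
        rw [hyjdef]; simp [hDdef]
      have h3 : Tj * (1 + D) = 1 - x j := hTj.trans hTdef
      rw [hyjj]
      linear_combination h3
    funext k
    simp only [Pi.add_apply, Pi.smul_apply, smul_eq_mul]
    linear_combination (sj k) * hcoef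
  set u' : F → ℝ := u - lam • v with hu'def
  have hu' : (LF + Ei) *ᵥ u' = sj := by
    have h1 : LF *ᵥ u' = sj - lam • si := by
      rw [hu'def, mulVec_sub, mulVec_smul, hu, hv]
    rw [add_mulVec, hEimul, h1]
    have hcoef : u' i - lam = 0 := by
      have hu'i : u' i = u i - lam * a := by
        rw [hu'def]; simp [hadef]
      rw [hu'i, huic]
      linear_combination -hlama
    funext k
    simp only [Pi.add_apply, Pi.sub_apply, Pi.smul_apply, smul_eq_mul]
    linear_combination (si k) * hcoef
  have hu'0 : ∀ k, 0 ≤ u' k :=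
    zsolve_nonneg (LF + Ei) hPDi hZi u' (by rw [hu', hsjdef]; exact single_nonneg' j)
  set D' : ℝ := u' j with hD'def
  have hD'0 : 0 ≤ D' := hu'0 j
  have hD'1 : (0:ℝ) < 1 + D' := by linarith
  have hD'eq : D' = D - lam * c := by
    rw [hD'def, hu'def]; simp [hDdef, hcdef]
  set phi : ℝ := (1 - yi j) / (1 + D') with hphidef
  have hphi : phi * (1 + D') = 1 - yi j := div_mul_cancel₀ _ hD'1.ne'
  set yij : F → ℝ := yi + phi • u' with hyijdef
  have hyij : (LF + Ei + Ej) *ᵥ yij = b + si + sj := by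
    have h1 : (LF + Ei) *ᵥ yij = (b + si) + phi • sj := by
      rw [hyijdef, mulVec_add, mulVec_smul, hyi, hu']
    rw [add_mulVec, hEjmul, h1]
    have hcoef : phi + yij j = 1 := by
      have hyijj : yij j = yi j + phi * D' := by
        rw [hyijdef]; simp [hD'def]
      rw [hyijj]
      linear_combination hphi
    funext k
    simp only [Pi.add_apply, Pi.smul_apply, smul_eq_mul]
    linear_combination (sj k) * hcoef
  -- yi is entrywise at most 1
  have hyi1 : ∀ k, 0 ≤ 1 - yi k := by
    have hsolve : (LF + Ei) *ᵥ ((1 : F → ℝ) - yi) = LF *ᵥ (1 : F → ℝ) - b := by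
      rw [mulVec_sub, hyi, add_mulVec, hEimul]
      have : ((1 : F → ℝ)) i • si = si := by rw [Pi.one_apply, one_smul]
      rw [this]
      abel
    have h := zsolve_nonneg (LF + Ei) hPDi hZi ((1 : F → ℝ) - yi) ?_
    · intro k; simpa using h k
    · intro k; rw [hsolve]; exact hr k
  -- the w' vector giving (1+D)q ≥ Ac
  set w' : F → ℝ := v - mu • u with hw'def
  have hw' : (LF + Ej) *ᵥ w' = si := by
    have h1 : LF *ᵥ w' = si - mu • sj := by
      rw [hw'def, mulVec_sub, mulVec_smul, hv, hu]
    rw [add_mulVec, hEjmul, h1]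
    have hcoef : w' j - mu = 0 := by
      have hw'j : w' j = c - mu * D := by
        rw [hw'def]; simp [hDdef, hcdef]
      rw [hw'j]
      linear_combination -hmuD
    funext k
    simp only [Pi.add_apply, Pi.sub_apply, Pi.smul_apply, smul_eq_mul]
    linear_combination (sj k) * hcoef
  have hw'0 : ∀ k, 0 ≤ w' k :=
    zsolve_nonneg (LF + Ej) hPDj hZj w' (by rw [hw', hsidef]; exact single_nonneg' i)
  have hqAc : 0 ≤ (1 + D) * q - A * c := by
    have h1 : 0 ≤ (1 : F → ℝ) ⬝ᵥ w' := one_dot_nonneg hw'0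
    have h2 : (1 : F → ℝ) ⬝ᵥ w' = q - mu * A := by
      rw [hw'def, dotProduct_sub, dotProduct_smul, smul_eq_mul, hAdef, hqdef]
    rw [h2] at h1
    have h3 : (q - mu * A) * (1 + D) = (1 + D) * q - A * c := by
      linear_combination (-A) * hmuD
    nlinarith [mul_nonneg h1 hD1.le, h3]
  have hP'0 : 0 ≤ A - lam * q := by
    have h1 : 0 ≤ (1 : F → ℝ) ⬝ᵥ u' := one_dot_nonneg hu'0
    have h2 : (1 : F → ℝ) ⬝ᵥ u' = A - lam * q := by
      rw [hu'def, dotProduct_sub, dotProduct_smul, smul_eq_mul, hAdef, hqdef]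
    rwa [h2] at h1
  -- rewrite the goal using the explicit solutions
  rw [inv_mulVec_of hdetij hyij, inv_mulVec_of hdeti hyi, inv_mulVec_of hdetj hyj]
  have e1 : (1 : F → ℝ) ⬝ᵥ yij = (1 : F → ℝ) ⬝ᵥ yi + phi * ((1 : F → ℝ) ⬝ᵥ u') := by
    rw [hyijdef, dotProduct_add, dotProduct_smul, smul_eq_mul]
  have e2 : (1 : F → ℝ) ⬝ᵥ yj = (1 : F → ℝ) ⬝ᵥ x + Tj * A := by
    rw [hyjdef, dotProduct_add, dotProduct_smul, smul_eq_mul, hAdef]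
  have e3 : (1 : F → ℝ) ⬝ᵥ u' = A - lam * q := by
    rw [hu'def, dotProduct_sub, dotProduct_smul, smul_eq_mul, hAdef, hqdef]
  rw [e1, e2, e3]
  have hT'eq : 1 - yi j = T - lam * g := by
    have : yi j = x j + theta * c := by
      rw [hyidef]; simp [hcdef]
    rw [this, hTdef, hthetadef, hlamdef]
    ring
  -- final scalar inequality
  clear_value lam mu theta Tj phi A q T g a D c D'
  have key : phi * (A - lam * q) ≤ Tj * A := by
    rw [hphidef, hT'eq, hTjdef]
    rw [div_mul_eq_mul_div, div_mul_eq_mul_div]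
    rw [div_le_div_iff₀ hD'1 hD1]
    have k1 : 0 ≤ lam * (1 + D) * g * (A - lam * q) :=
      mul_nonneg (mul_nonneg (mul_nonneg hlam0 hD1.le) hg0) hP'0
    have k2 : 0 ≤ lam * T * ((1 + D) * q - A * c) :=
      mul_nonneg (mul_nonneg hlam0 hT0) hqAc
    have idty : T * A * (1 + D') - (T - lam * g) * (A - lam * q) * (1 + D)
        = lam * (1 + D) * g * (A - lam * q) + lam * T * ((1 + D) * q - A * c) := by
      rw [hD'eq]; ring
    linarith
  linarith
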